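/- For each r ≥ 2, each facet F_j = {x ∈ ℝ₊^r : x_j = 0} of the cone ℝ₊^r is unimodular with respect to the lattice L = gp(M_r) = {a ∈ ℤ^r : a₁ ≡ ⋯ ≡ a_r mod r}: that is, the monoid F_j ∩ L is generated by a subset of a ℤ-basis of L. However, the full cone ℝ₊^r is not unimodular with respect to L, i.e., ℝ₊^r ∩ L is not generated by part of a basis of L. -/

import Mathlib

open scoped NNReal
noncomputable section

/-- Real image of an integer vector. -/
def toR {r : ℕ} (v : Fin r → ℤ) : Fin r → ℝ := fun i => (v i : ℝ)

/-- The group of differences of a submonoid of an abelian group. -/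
def gp {G : Type*} [AddCommGroup G] (M : AddSubmonoid G) : AddSubgroup G :=
  AddSubgroup.closure (M : Set G)

/-- `M` is normal: `c • x ∈ M` for `x ∈ gp M`, `c ≥ 1` implies `x ∈ M`. -/
def IsNormalMonoid {G : Type*} [AddCommGroup G] (M : AddSubmonoid G) : Prop :=
  ∀ (c : ℕ) (x : G), 0 < c → x ∈ gp M → (c : ℤ) • x ∈ M → x ∈ M

/-- `M` is positive: no nontrivial units. -/
def IsPositiveMonoid {G : Type*} [AddCommGroup G] (M : AddSubmonoid G) : Prop :=
  ∀ x ∈ M, -x ∈ M → x = 0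

/-- The cone `ℝ₊M ⊆ ℝ^r` spanned by a submonoid `M ⊆ ℤ^r`. -/
def coneM {r : ℕ} (M : AddSubmonoid (Fin r → ℤ)) : Set (Fin r → ℝ) :=
  (Submodule.span ℝ≥0 (toR '' (M : Set (Fin r → ℤ))) : Submodule ℝ≥0 (Fin r → ℝ))

/-- The distinguished vector `e = (1,0) ∈ ℤ ⊕ ℤ^r`. -/
def eVec (r : ℕ) : ℤ × (Fin r → ℤ) := (1, 0)

/-- `M_i = (ℝ ⊕ ℝ₊M) ∩ (ℤ(x₁ - ie) + ⋯ + ℤ(x_r - ie))`, with `x_j - ie = (-i, x_j)`. -/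
def Mi {r : ℕ} (M : AddSubmonoid (Fin r → ℤ)) (x : Fin r → (Fin r → ℤ)) (i : ℕ) :
    Set (ℤ × (Fin r → ℤ)) :=
  {p | p ∈ AddSubgroup.closure (Set.range fun j => ((-(i : ℤ), x j) : ℤ × (Fin r → ℤ))) ∧
       toR p.2 ∈ coneM M}

/-- The submonoid (as a set) `ℤ₊e + M_i`. -/
def ZeMi {r : ℕ} (M : AddSubmonoid (Fin r → ℤ)) (x : Fin r → (Fin r → ℤ)) (i : ℕ) :
    Set (ℤ × (Fin r → ℤ)) :=
  {p | ∃ (z : ℕ) (m : ℤ × (Fin r → ℤ)), m ∈ Mi M x i ∧ p = (z : ℤ) • eVec r + m}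

/-- The monoid `M_r = ℤ₊(1,…,1) + Σ_j ℤ₊(r·e_j) ⊆ ℤ₊^r`. -/
def Mr (r : ℕ) : AddSubmonoid (Fin r → ℤ) :=
  AddSubmonoid.closure
    ({fun _ => 1} ∪ Set.range fun j : Fin r => (r : ℤ) • Pi.single j (1 : ℤ))

/-- A set `T` of lattice points is unimodular w.r.t. the lattice `L` if, as a monoid, it
is generated by part of a ℤ-basis of `L`. -/
def Unimod {r : ℕ} (L : AddSubgroup (Fin r → ℤ)) (T : Set (Fin r → ℤ)) : Prop :=
  ∃ (bb : Module.Basis (Fin r) ℤ L) (S : Set (Fin r)),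
    T = ((AddSubmonoid.closure ((fun i => ((bb i : L) : Fin r → ℤ)) '' S)) :
      Set (Fin r → ℤ))

theorem closure_cases {G : Type*} [AddCommMonoid G] (s : Set G) (x : G)
    (hx : x ∈ AddSubmonoid.closure s) :
    x = 0 ∨ x ∈ s ∨ ∃ a b, a ∈ AddSubmonoid.closure s ∧ b ∈ AddSubmonoid.closure s
      ∧ a ≠ 0 ∧ b ≠ 0 ∧ x = a + b := by
  induction hx using AddSubmonoid.closure_induction with
  | mem y hy => exact Or.inr (Or.inl hy)
  | zero => exact Or.inl rfl
  | add a b ha hb iha ihb =>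
    by_cases h0 : a = 0
    · rw [h0, zero_add]; exact ihb
    by_cases h1 : b = 0
    · rw [h1, add_zero]; exact iha
    exact Or.inr (Or.inr ⟨a, b, ha, hb, h0, h1, rfl⟩)

theorem mem_of_irred {G : Type*} [AddCommMonoid G] (s : Set G) (x : G)
    (hx : x ∈ AddSubmonoid.closure s) (hne : x ≠ 0)
    (hirr : ∀ a b, a ∈ AddSubmonoid.closure s → b ∈ AddSubmonoid.closure s →
      a ≠ 0 → b ≠ 0 → x ≠ a + b) : x ∈ s := by
  rcases closure_cases s x hx with h | h | ⟨a, b, ha, hb, h0, h1, hab⟩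
  · exact absurd h hne
  · exact h
  · exact absurd hab (hirr a b ha hb h0 h1)

theorem ones_mem_Mr (r : ℕ) : (fun _ => (1:ℤ)) ∈ Mr r :=
  AddSubmonoid.subset_closure (Or.inl rfl)

theorem rE_mem_Mr (r : ℕ) (i : Fin r) : (r : ℤ) • Pi.single i (1:ℤ) ∈ Mr r :=
  AddSubmonoid.subset_closure (Or.inr ⟨i, rfl⟩)

theorem ones_mem_gp (r : ℕ) : (fun _ => (1:ℤ)) ∈ gp (Mr r) :=
  AddSubgroup.subset_closure (ones_mem_Mr r)

theorem rE_mem_gp (r : ℕ) (i : Fin r) : (r : ℤ) • Pi.single i (1:ℤ) ∈ gp (Mr r) :=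
  AddSubgroup.subset_closure (rE_mem_Mr r i)

def Kgrp (r : ℕ) : AddSubgroup (Fin r → ℤ) where
  carrier := {v : Fin r → ℤ | ∀ i j, (r : ℤ) ∣ v i - v j}
  add_mem' := by
    intro a b ha hb i j
    have h : (a + b) i - (a + b) j = (a i - a j) + (b i - b j) := by
      simp; ring
    rw [h]; exact dvd_add (ha i j) (hb i j)
  zero_mem' := by intro i j; simp
  neg_mem' := by
    intro a ha i j
    have h : (-a) i - (-a) j = a j - a i := by simp; ring
    rw [h]; exact ha j i

theorem gp_dvd (r : ℕ) {v : Fin r → ℤ} (hv : v ∈ gp (Mr r)) :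
    ∀ i j, (r : ℤ) ∣ v i - v j := by
  have hle : gp (Mr r) ≤ Kgrp r := by
    rw [gp, AddSubgroup.closure_le]
    intro x hx
    have hle2 : Mr r ≤ (Kgrp r).toAddSubmonoid := by
      rw [Mr, AddSubmonoid.closure_le]
      rintro y (rfl | ⟨j, rfl⟩)
      · intro i k; simp
      · intro i k
        simp only [Pi.smul_apply, smul_eq_mul]
        exact dvd_sub (Dvd.intro _ rfl) (Dvd.intro _ rfl)
    exact hle2 hx
  exact hle hv

def psi (r : ℕ) (j : Fin r) : (Fin r → ℤ) →ₗ[ℤ] (Fin r → ℤ) where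
  toFun c := fun k => c j + if k = j then 0 else (r:ℤ) * c k
  map_add' a b := by funext k; by_cases h : k = j <;> simp [h] <;> ring
  map_smul' z a := by funext k; by_cases h : k = j <;> simp [h] <;> ring

theorem psi_eq (r : ℕ) (j : Fin r) (c : Fin r → ℤ) :
    psi r j c = (c j) • (fun _ => (1:ℤ)) +
      ∑ i ∈ Finset.univ.erase j, (c i) • ((r:ℤ) • Pi.single i (1:ℤ)) := by
  funext k
  simp only [psi, LinearMap.coe_mk, AddHom.coe_mk, Pi.add_apply, Pi.smul_apply,
    Finset.sum_apply, smul_eq_mul, Pi.single_apply, mul_ite, mul_one, mul_zero]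
  rw [Finset.sum_ite_eq]
  by_cases h : k = j <;> simp [h, Finset.mem_erase, mul_comm]

theorem psi_mem (r : ℕ) (j : Fin r) (c : Fin r → ℤ) : psi r j c ∈ gp (Mr r) := by
  rw [psi_eq]
  exact AddSubgroup.add_mem _ (AddSubgroup.zsmul_mem _ (ones_mem_gp r) _)
    (AddSubgroup.sum_mem _ fun i _ => AddSubgroup.zsmul_mem _ (rE_mem_gp r i) _)

def fmap (r : ℕ) (j : Fin r) : (Fin r → ℤ) →ₗ[ℤ] ↥(gp (Mr r)) where
  toFun c := ⟨psi r j c, psi_mem r j c⟩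
  map_add' a b := Subtype.ext (by simp)
  map_smul' z a := Subtype.ext (by
    funext k
    show psi r j (z • a) k = (z • (psi r j a : Fin r → ℤ)) k
    by_cases h : k = j <;> simp [psi, h] <;> ring)

theorem fmap_bij (r : ℕ) (hr : 2 ≤ r) (j : Fin r) : Function.Bijective (fmap r j) := by
  have hr0 : (r:ℤ) ≠ 0 := by positivity
  constructor
  · intro a b hab
    have h : psi r j a = psi r j b := congrArg Subtype.val hab
    funext k
    have hj := congrFun h j
    simp [psi] at hj
    by_cases hk : k = j
    · rw [hk]; exact hj
    · have hkk := congrFun h k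
      simp [psi, hk, hj] at hkk
      rcases hkk with h' | h'
      · exact h'
      · omega
  · rintro ⟨v, hv⟩
    refine ⟨fun k => if k = j then v j else (v k - v j) / r, Subtype.ext ?_⟩
    have hd : ∀ k, (r:ℤ) ∣ v k - v j := fun k => gp_dvd r hv k j
    funext k
    show psi r j _ k = v k
    by_cases hk : k = j
    · simp [psi, hk]
    · simp [psi, hk]
      rw [Int.mul_ediv_cancel' (hd k)]
      ring

def bb1 (r : ℕ) (hr : 2 ≤ r) (j : Fin r) : Module.Basis (Fin r) ℤ ↥(gp (Mr r)) :=
  (Pi.basisFun ℤ (Fin r)).map (LinearEquiv.ofBijective (fmap r j) (fmap_bij r hr j))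

theorem bb1_coe (r : ℕ) (hr : 2 ≤ r) (j : Fin r) (i : Fin r) :
    ((bb1 r hr j i : gp (Mr r)) : Fin r → ℤ) = psi r j (Pi.single i 1) := by
  rw [bb1, Module.Basis.map_apply, Pi.basisFun_apply, LinearEquiv.ofBijective_apply]; rfl

theorem bb1_coe_ne (r : ℕ) (hr : 2 ≤ r) (j : Fin r) (i : Fin r) (hij : i ≠ j) :
    ((bb1 r hr j i : gp (Mr r)) : Fin r → ℤ) = (r:ℤ) • Pi.single i (1:ℤ) := by
  rw [bb1_coe]
  funext k
  simp only [psi, LinearMap.coe_mk, AddHom.coe_mk, Pi.smul_apply, Pi.single_apply,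
    smul_eq_mul]
  by_cases hk : k = j
  · simp [hk, (by simpa [eq_comm] using hij : ¬ (j = i)), if_neg (Ne.symm hij)]
  · simp [hk, if_neg (Ne.symm hij)]

theorem facet_eq (r : ℕ) (hr : 2 ≤ r) (j : Fin r) :
    {v : Fin r → ℤ | v ∈ gp (Mr r) ∧ (∀ i, 0 ≤ v i) ∧ v j = 0} =
      (AddSubmonoid.closure ((fun i => (r:ℤ) • Pi.single i (1:ℤ)) '' {i | i ≠ j}) :
        Set (Fin r → ℤ)) := by
  apply Set.Subset.antisymm
  · rintro v ⟨hvg, hvnn, hvj⟩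
    have hd : ∀ k, (r:ℤ) ∣ v k := by
      intro k; have := gp_dvd r hvg k j; rwa [hvj, sub_zero] at this
    have hv_eq : v = ∑ i ∈ Finset.univ.erase j,
        ((v i / r).toNat) • ((r:ℤ) • Pi.single i (1:ℤ)) := by
      funext k
      rw [Finset.sum_apply]
      have hterm : ∀ i, ((((v i / r).toNat) • ((r:ℤ) • Pi.single i (1:ℤ)) : Fin r → ℤ)) k
          = if k = i then ((v i / r).toNat : ℤ) * r else 0 := by
        intro i
        by_cases h : k = i <;> simp [h, Pi.single_apply, mul_comm]
      rw [Finset.sum_congr rfl (fun i _ => hterm i), Finset.sum_ite_eq]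
      by_cases hk : k = j
      · simp [hk, hvj]
      · rw [if_pos (Finset.mem_erase.mpr ⟨hk, Finset.mem_univ k⟩)]
        rw [Int.toNat_of_nonneg (Int.ediv_nonneg (hvnn k) (by positivity)),
          Int.ediv_mul_cancel (hd k)]
    rw [hv_eq]
    refine AddSubmonoid.sum_mem _ fun i hi => nsmul_mem ?_ _
    apply AddSubmonoid.subset_closure
    refine Set.mem_image_of_mem _ ?_
    show i ≠ j
    exact (Finset.mem_erase.mp hi).1
  · intro v hv
    have hle : AddSubmonoid.closure ((fun i => (r:ℤ) • Pi.single i (1:ℤ)) '' {i | i ≠ j}) ≤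
        ({ carrier := {v : Fin r → ℤ | v ∈ gp (Mr r) ∧ (∀ i, 0 ≤ v i) ∧ v j = 0}
           zero_mem' := ⟨AddSubgroup.zero_mem _, fun i => le_refl 0, rfl⟩
           add_mem' := fun ha hb => ⟨AddSubgroup.add_mem _ ha.1 hb.1,
             fun i => add_nonneg (ha.2.1 i) (hb.2.1 i),
             by simp only [Pi.add_apply, ha.2.2, hb.2.2, add_zero]⟩ } :
          AddSubmonoid (Fin r → ℤ)) := by
      rw [AddSubmonoid.closure_le]
      rintro _ ⟨i, hi, rfl⟩
      refine ⟨rE_mem_gp r i, fun k => ?_, ?_⟩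
      · by_cases h : k = i <;> simp [h, Pi.single_apply]
      · have : j ≠ i := fun h => hi (h ▸ rfl)
        simp [Pi.single_apply, this]
    exact hle hv

theorem facet_unimod (r : ℕ) (hr : 2 ≤ r) (j : Fin r) :
    ∃ (bb : Module.Basis (Fin r) ℤ (gp (Mr r))) (S : Set (Fin r)),
      {v : Fin r → ℤ | v ∈ gp (Mr r) ∧ (∀ i, 0 ≤ v i) ∧ v j = 0} =
      ((AddSubmonoid.closure ((fun i => ((bb i : gp (Mr r)) : Fin r → ℤ)) '' S)) :
        Set (Fin r → ℤ)) := by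
  refine ⟨bb1 r hr j, {i | i ≠ j}, ?_⟩
  have himg : (fun i => ((bb1 r hr j i : gp (Mr r)) : Fin r → ℤ)) '' {i | i ≠ j}
      = (fun i => (r:ℤ) • Pi.single i (1:ℤ)) '' {i | i ≠ j} :=
    Set.image_congr (fun i hi => bb1_coe_ne r hr j i hi)
  rw [himg]
  exact facet_eq r hr j

theorem not_unimod (r : ℕ) (hr : 2 ≤ r) :
    ¬ ∃ (bb : Module.Basis (Fin r) ℤ (gp (Mr r))) (S : Set (Fin r)),
      {v : Fin r → ℤ | v ∈ gp (Mr r) ∧ ∀ i, 0 ≤ v i} =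
      ((AddSubmonoid.closure ((fun i => ((bb i : gp (Mr r)) : Fin r → ℤ)) '' S)) :
        Set (Fin r → ℤ)) := by
  rintro ⟨bb, S, hT⟩
  have hnt : Nontrivial (Fin r) := Fin.nontrivial_iff_two_le.mpr hr
  set G := (fun i => ((bb i : gp (Mr r)) : Fin r → ℤ)) '' S with hG
  have hmem : ∀ x : Fin r → ℤ,
      (x ∈ gp (Mr r) ∧ ∀ i, 0 ≤ x i) ↔ x ∈ AddSubmonoid.closure G :=
    fun x => Set.ext_iff.mp hT x
  -- (1,…,1) is in G
  have h1 : (fun _ => (1:ℤ)) ∈ G := by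
    apply mem_of_irred G _ ((hmem _).mp ⟨ones_mem_gp r, fun i => zero_le_one⟩)
    · intro h
      have := congrFun h ⟨0, by omega⟩
      simp at this
    · intro a b ha hb ha0 hb0 heq
      obtain ⟨hag, hann⟩ := (hmem a).mpr ha
      obtain ⟨hbg, hbnn⟩ := (hmem b).mpr hb
      obtain ⟨p, hp⟩ : ∃ p, a p ≠ 0 := by
        by_contra h; push_neg at h; exact ha0 (funext h)
      obtain ⟨q, hq⟩ : ∃ q, b q ≠ 0 := by
        by_contra h; push_neg at h; exact hb0 (funext h)
      have hsum : ∀ k, a k + b k = 1 := fun k => (congrFun heq k).symm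
      have hap : a p = 1 := by have h1 := hsum p; have := hbnn p; have := hann p; omega
      have haq : a q = 0 := by have h1 := hsum q; have := hbnn q; have := hann q; omega
      have hd := gp_dvd r hag p q
      rw [hap, haq, sub_zero] at hd
      have := Int.le_of_dvd one_pos hd
      omega
  -- each r·e_i is in G
  have h2 : ∀ i : Fin r, (r:ℤ) • Pi.single i (1:ℤ) ∈ G := by
    intro i
    have hnn : ∀ k, (0:ℤ) ≤ (((r:ℤ) • Pi.single i (1:ℤ) : Fin r → ℤ)) k := by
      intro k; by_cases h : k = i <;> simp [h, Pi.single_apply]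
    apply mem_of_irred G _ ((hmem _).mp ⟨rE_mem_gp r i, hnn⟩)
    · intro h
      have := congrFun h i
      simp at this
      omega
    · intro a b ha hb ha0 hb0 heq
      obtain ⟨hag, hann⟩ := (hmem a).mpr ha
      obtain ⟨hbg, hbnn⟩ := (hmem b).mpr hb
      have hsum : ∀ k, a k + b k = if k = i then (r:ℤ) else 0 := by
        intro k
        have := (congrFun heq k).symm
        simpa [Pi.single_apply, mul_ite] using this
      have hz : ∀ k, k ≠ i → a k = 0 ∧ b k = 0 := by
        intro k hk
        have h1 := hsum k
        rw [if_neg hk] at h1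
        have := hann k; have := hbnn k
        omega
      have hai : a i ≠ 0 := by
        intro h
        exact ha0 (funext fun k => by
          by_cases hk : k = i
          · rw [hk]; exact h
          · exact (hz k hk).1)
      have hbi : b i ≠ 0 := by
        intro h
        exact hb0 (funext fun k => by
          by_cases hk : k = i
          · rw [hk]; exact h
          · exact (hz k hk).2)
      obtain ⟨k0, hk0⟩ := exists_ne i
      have hda := gp_dvd r hag i k0
      rw [(hz k0 hk0).1, sub_zero] at hda
      have hdb := gp_dvd r hbg i k0
      rw [(hz k0 hk0).2, sub_zero] at hdb
      have hra : (r:ℤ) ≤ a i := Int.le_of_dvd (lt_of_le_of_ne (hann i) (Ne.symm hai)) hda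
      have hrb : (r:ℤ) ≤ b i := Int.le_of_dvd (lt_of_le_of_ne (hbnn i) (Ne.symm hbi)) hdb
      have h1 := hsum i
      rw [if_pos rfl] at h1
      omega
  -- counting
  set vec : Option (Fin r) → (Fin r → ℤ) :=
    fun o => o.elim (fun _ => (1:ℤ)) (fun i => (r:ℤ) • Pi.single i (1:ℤ)) with hvec
  have hvecG : ∀ o, vec o ∈ G := by rintro (_ | i); exacts [h1, h2 i]
  have hvecinj : Function.Injective vec := by
    have haux : ∀ i : Fin r, vec none ≠ vec (some i) := by
      intro i h
      obtain ⟨k0, hk0⟩ := exists_ne i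
      have := congrFun h k0
      simp [hvec, Pi.single_apply, hk0] at this
    rintro (_ | i) (_ | i') h
    · rfl
    · exact absurd h (haux i')
    · exact absurd h.symm (haux i)
    · congr 1
      by_contra hne
      have := congrFun h i
      simp [hvec, Pi.single_apply, hne] at this
      omega
  have hF : ∀ o, ∃ k, vec o = ((bb k : gp (Mr r)) : Fin r → ℤ) := by
    intro o
    obtain ⟨k, _, hk⟩ := hvecG o
    exact ⟨k, hk.symm⟩
  choose F hFe using hF
  have hFinj : Function.Injective F := by
    intro o o' h
    apply hvecinj
    rw [hFe o, hFe o', h]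
  have := Fintype.card_le_of_injective F hFinj
  simp [Fintype.card_option] at this

/-- each facet `{x ∈ ℝ₊^r : x_j = 0}` of ℝ₊^r is unimodular with respect to
the lattice `L = gp(M_r)`, but the full cone ℝ₊^r is not. -/
theorem statement13 (r : ℕ) (hr : 2 ≤ r) :
    (∀ j : Fin r, Unimod (gp (Mr r))
      {v : Fin r → ℤ | v ∈ gp (Mr r) ∧ (∀ i, 0 ≤ v i) ∧ v j = 0}) ∧
    ¬ Unimod (gp (Mr r)) {v : Fin r → ℤ | v ∈ gp (Mr r) ∧ ∀ i, 0 ≤ v i} := by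
  exact ⟨fun j => facet_unimod r hr j, not_unimod r hr⟩
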